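/- Let (u₁, m₁, H̄₁) and (u₂, m₂, H̄₂) be classical solutions of the ergodic MFG system. Then ∫_{T^d} (m₁ − m₂)(g(m₁) − g(m₂)) + (1/2)(m₁ + m₂)|Du₁ − Du₂|² dx = 0. Consequently m₁ = m₂ on T^d, Du₁ = Du₂ at every point where m₁ > 0, and H̄₁ = H̄₂. -/

import Mathlib

open MeasureTheory Set

noncomputable def pd (d : ℕ) (i : Fin d) (f : (Fin d → ℝ) → ℝ) : (Fin d → ℝ) → ℝ :=
  fun x => fderiv ℝ f x (Pi.single i 1)

noncomputable def gradSq (d : ℕ) (u : (Fin d → ℝ) → ℝ) (x : Fin d → ℝ) : ℝ :=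
  ∑ i, pd d i u x ^ 2

noncomputable def divUp (d : ℕ) (m u : (Fin d → ℝ) → ℝ) (x : Fin d → ℝ) : ℝ :=
  ∑ i, pd d i (fun y => m y * pd d i u y) x

/-- `f` is `ℤ^d`-periodic, i.e. a function on the flat torus `T^d`. -/
def ZPer (d : ℕ) (f : (Fin d → ℝ) → ℝ) : Prop :=
  ∀ (x : Fin d → ℝ) (k : Fin d → ℤ), f (x + fun i => (k i : ℝ)) = f x

/-- `f` has finite `α`-Hölder seminorm. -/
def HolderSemi (α : ℝ) {E : Type*} [PseudoMetricSpace E] (f : E → ℝ) : Prop :=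
  ∃ C : ℝ, 0 ≤ C ∧ ∀ x y, |f x - f y| ≤ C * dist x y ^ α

/-- `f` is of class `C^{1,α}`. -/
def C1Hold (d : ℕ) (α : ℝ) (f : (Fin d → ℝ) → ℝ) : Prop :=
  ContDiff ℝ 1 f ∧ ∀ i, HolderSemi α (pd d i f)

/-- `f` is of class `C^{2,α}`. -/
def C2Hold (d : ℕ) (α : ℝ) (f : (Fin d → ℝ) → ℝ) : Prop :=
  ContDiff ℝ 2 f ∧ ∀ i j, HolderSemi α (pd d i (pd d j f))

/-- `f` is locally `α`-Hölder on `s`. -/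
def LocHolderOn (α : ℝ) (f : ℝ → ℝ) (s : Set ℝ) : Prop :=
  ∀ K : Set ℝ, IsCompact K → K ⊆ s →
    ∃ C : ℝ, 0 ≤ C ∧ ∀ x ∈ K, ∀ y ∈ K, |f x - f y| ≤ C * dist x y ^ α

/-- Standing hypotheses on `g`: strictly increasing and continuous on `[0,∞)`,
of class `C^{1,α}` on `(0,∞)`. -/
def Ghyp (α : ℝ) (g : ℝ → ℝ) : Prop :=
  StrictMonoOn g (Ici 0) ∧ ContinuousOn g (Ici 0) ∧
    DifferentiableOn ℝ g (Ioi 0) ∧ LocHolderOn α (deriv g) (Ioi 0)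

/-- Standing hypotheses on `V`: a `C^{1,α}` function on the torus. -/
def Vhyp (d : ℕ) (α : ℝ) (V : (Fin d → ℝ) → ℝ) : Prop :=
  ZPer d V ∧ C1Hold d α V

/-- The oscillation of `V` over the torus. -/
noncomputable def oscV (d : ℕ) (V : (Fin d → ℝ) → ℝ) : ℝ :=
  sSup (V '' Icc (0 : Fin d → ℝ) 1) - sInf (V '' Icc (0 : Fin d → ℝ) 1)

/-- Assumption (A1): `g⁻¹(g(1) − osc V) > 0`, i.e. `g(1) − osc V` is attained by `g` on `(0,∞)`. -/
def A1 (d : ℕ) (g : ℝ → ℝ) (V : (Fin d → ℝ) → ℝ) : Prop :=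
  g 1 - oscV d V ∈ g '' Ioi (0 : ℝ)

/-- Assumption (A2). -/
def A2 (g : ℝ → ℝ) : Prop :=
  ∃ C₁ C₂ β : ℝ, 0 < C₁ ∧ 0 < C₂ ∧
    (∀ z : ℝ, 0 < z → C₁ * z ^ β ≤ deriv g z) ∧
    (∀ z : ℝ, 0 ≤ z → g z ≤ C₂ + z * g z)

/-- A classical solution `(u, m)` of the discounted MFG system
`ε u + |Du|²/2 + V = g(m)`, `ε m − div(m Du) = ε` on `T^d`. -/
structure DiscSol (d : ℕ) (α : ℝ) (g : ℝ → ℝ) (V : (Fin d → ℝ) → ℝ) (ε : ℝ)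
    (u m : (Fin d → ℝ) → ℝ) : Prop where
  per_u : ZPer d u
  per_m : ZPer d m
  reg_u : C2Hold d α u
  reg_m : C1Hold d α m
  m_nonneg : ∀ x, 0 ≤ m x
  hj : ∀ x, ε * u x + (1 / 2) * gradSq d u x + V x = g (m x)
  fp : ∀ x, ε * m x - divUp d m u x = ε

/-- A classical solution `(u, m, H̄)` of the ergodic MFG system
`|Du|²/2 + V = g(m) + H̄`, `−div(m Du) = 0`, `m ≥ 0`, `∫ m = 1` on `T^d`. -/
structure ErgSol (d : ℕ) (α : ℝ) (g : ℝ → ℝ) (V : (Fin d → ℝ) → ℝ)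
    (u m : (Fin d → ℝ) → ℝ) (H : ℝ) : Prop where
  per_u : ZPer d u
  per_m : ZPer d m
  reg_u : C2Hold d α u
  reg_m : C1Hold d α m
  m_nonneg : ∀ x, 0 ≤ m x
  m_mass : (∫ x in Icc (0 : Fin d → ℝ) 1, m x) = 1
  hj : ∀ x, (1 / 2) * gradSq d u x + V x = g (m x) + H
  fp : ∀ x, divUp d m u x = 0

/-! ### Auxiliary lemmas -/

lemma contDiff_pd {d : ℕ} {f : (Fin d → ℝ) → ℝ} {n : ℕ} (hf : ContDiff ℝ (n+1) f) (i : Fin d) :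
    ContDiff ℝ n (pd d i f) := by
  have h := hf.fderiv_right (m := n) (by exact_mod_cast le_refl ((n:ℕ∞)+1))
  exact (ContinuousLinearMap.apply ℝ ℝ (Pi.single i (1:ℝ))).contDiff.comp h

lemma pd_cont {d : ℕ} {f : (Fin d → ℝ) → ℝ} (hf : ContDiff ℝ 1 f) (i : Fin d) :
    Continuous (pd d i f) := by
  have h := hf.fderiv_right (m := 0) (by norm_num)
  exact ((ContinuousLinearMap.apply ℝ ℝ (Pi.single i (1:ℝ))).contDiff.comp h).continuous

lemma pd_per {d : ℕ} {f : (Fin d → ℝ) → ℝ} (hd : Differentiable ℝ f) (hf : ZPer d f)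
    (i : Fin d) (x : Fin d → ℝ) (k : Fin d → ℤ) :
    pd d i f (x + fun j => (k j : ℝ)) = pd d i f x := by
  set c : Fin d → ℝ := fun j => (k j : ℝ) with hc
  have h1 : HasFDerivAt f (fderiv ℝ f (x + c)) (x + c) := (hd _).hasFDerivAt
  have h2 : HasFDerivAt (fun y => f (y + c)) (fderiv ℝ f (x + c)) x := by
    have := h1.comp x ((hasFDerivAt_id x).add_const c)
    simpa [Function.comp_def] using this
  have h3 : (fun y => f (y + c)) = f := funext fun y => hf y k
  rw [h3] at h2
  show fderiv ℝ f (x + c) (Pi.single i 1) = fderiv ℝ f x (Pi.single i 1)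
  rw [h2.fderiv]

lemma pd_mul {d : ℕ} {f g : (Fin d → ℝ) → ℝ} (hf : Differentiable ℝ f)
    (hg : Differentiable ℝ g) (i : Fin d) (x : Fin d → ℝ) :
    pd d i (fun y => f y * g y) x = pd d i f x * g x + f x * pd d i g x := by
  show fderiv ℝ (fun y => f y * g y) x (Pi.single i 1) = _
  rw [fderiv_fun_mul (hf x) (hg x)]
  simp [pd]
  ring

lemma pd_sub {d : ℕ} {f g : (Fin d → ℝ) → ℝ} (hf : Differentiable ℝ f)
    (hg : Differentiable ℝ g) (i : Fin d) (x : Fin d → ℝ) :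
    pd d i (fun y => f y - g y) x = pd d i f x - pd d i g x := by
  show fderiv ℝ (fun y => f y - g y) x (Pi.single i 1) = _
  rw [fderiv_fun_sub (hf x) (hg x)]
  simp [pd]

lemma div_int_zero (d : ℕ) (F : Fin d → ((Fin d → ℝ) → ℝ))
    (hC : ∀ i, ContDiff ℝ 1 (F i)) (hP : ∀ i, ZPer d (F i)) :
    (∫ x in Icc (0 : Fin d → ℝ) 1, ∑ i, pd d i (F i) x) = 0 := by
  cases d with
  | zero => simp
  | succ n =>
    have hle : (0 : Fin (n+1) → ℝ) ≤ 1 := fun i => zero_le_one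
    have hcont : Continuous (fun x => ∑ i, fderiv ℝ (F i) x (Pi.single i (1:ℝ))) := by
      exact continuous_finset_sum _ fun i _ => pd_cont (hC i) i
    have key := integral_divergence_of_hasFDerivAt_off_countable'
      (0 : Fin (n+1) → ℝ) 1 hle F (fun i x => fderiv ℝ (F i) x) ∅ countable_empty
      (fun i => (hC i).continuous.continuousOn)
      (fun x _ i => ((hC i).differentiable (by norm_num) (x)).hasFDerivAt)
      (hcont.continuousOn.integrableOn_compact isCompact_Icc)
    rw [show (∫ x in Icc (0 : Fin (n+1) → ℝ) 1, ∑ i, pd (n+1) i (F i) x)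
        = ∫ x in Icc (0 : Fin (n+1) → ℝ) 1, ∑ i, fderiv ℝ (F i) x (Pi.single i (1:ℝ)) from rfl,
      key]
    refine Finset.sum_eq_zero fun i _ => ?_
    rw [sub_eq_zero]
    refine setIntegral_congr_fun measurableSet_Icc fun x _ => ?_
    have hper := hP i (i.insertNth ((0 : Fin (n+1) → ℝ) i) x) (Pi.single i 1)
    have heq : (i.insertNth ((0 : Fin (n+1) → ℝ) i) x
          + fun j => ((Pi.single i 1 : Fin (n+1) → ℤ) j : ℝ))
        = i.insertNth ((1 : Fin (n+1) → ℝ) i) x := by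
      funext j
      refine Fin.succAboveCases i ?_ (fun j' => ?_) j
      · simp
      · have hne : i.succAbove j' ≠ i := Fin.succAbove_ne i j'
        simp [Pi.single_eq_of_ne hne]
    rw [← heq, hper]

lemma cont_nonneg_zero {d : ℕ} {f : (Fin d → ℝ) → ℝ} (hf : Continuous f)
    (h0 : ∀ x ∈ Icc (0 : Fin d → ℝ) 1, 0 ≤ f x)
    (hint : (∫ x in Icc (0 : Fin d → ℝ) 1, f x) = 0) :
    ∀ x ∈ Icc (0 : Fin d → ℝ) 1, f x = 0 := by
  by_contra hcon
  push_neg at hcon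
  obtain ⟨x₀, hx₀, hne⟩ := hcon
  have hpos : 0 < f x₀ := lt_of_le_of_ne (h0 x₀ hx₀) (Ne.symm hne)
  obtain ⟨δ, hδ, hball⟩ :=
    Metric.continuousAt_iff.1 (hf.continuousAt (x := x₀)) (f x₀ / 2) (by linarith)
  set c : Fin d → ℝ := fun i => max 0 (x₀ i - δ/2) with hc
  set e : Fin d → ℝ := fun i => min 1 (x₀ i + δ/2) with he
  have hce : ∀ i, c i < e i := by
    intro i
    have h0i : (0:ℝ) ≤ x₀ i := hx₀.1 i
    have h1i : x₀ i ≤ 1 := hx₀.2 i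
    exact max_lt (lt_min zero_lt_one (by linarith)) (lt_min (by linarith) (by linarith))
  have hsub : Icc c e ⊆ Icc (0 : Fin d → ℝ) 1 := by
    intro y hy
    constructor <;> intro i
    · exact le_trans (le_max_left _ _) (hy.1 i)
    · exact le_trans (hy.2 i) (min_le_left _ _)
  have hlb : ∀ y ∈ Icc c e, f x₀ / 2 ≤ f y := by
    intro y hy
    have hdist : dist y x₀ < δ := by
      rcases Nat.eq_zero_or_pos d with hd | hd
      · have : y = x₀ := funext fun i => absurd (i.2) (by omega)
        simpa [this] using hδ
      · rw [dist_pi_lt_iff hδ]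
        intro i
        rw [Real.dist_eq, abs_sub_lt_iff]
        constructor
        · have := hy.2 i; have := min_le_right (1:ℝ) (x₀ i + δ/2)
          linarith [hy.2 i, min_le_right (1:ℝ) (x₀ i + δ/2)]
        · have h1 := hy.1 i
          have h2 : x₀ i - δ/2 ≤ c i := le_max_right _ _
          linarith
    have := hball hdist
    rw [Real.dist_eq, abs_sub_lt_iff] at this
    linarith [this.2]
  have hvol : 0 < (volume (Icc c e)).toReal := by
    rw [Real.volume_Icc_pi_toReal (fun i => (hce i).le)]
    exact Finset.prod_pos fun i _ => sub_pos.2 (hce i)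
  have hint2 : IntegrableOn f (Icc (0 : Fin d → ℝ) 1) :=
    hf.continuousOn.integrableOn_compact isCompact_Icc
  have h1 : f x₀ / 2 * (volume (Icc c e)).toReal ≤ ∫ x in Icc c e, f x :=
    setIntegral_ge_of_const_le_real measurableSet_Icc
      (ne_of_lt ((isCompact_Icc).measure_lt_top)) hlb (hint2.mono_set hsub)
  have h2 : (∫ x in Icc c e, f x) ≤ ∫ x in Icc (0 : Fin d → ℝ) 1, f x := by
    refine setIntegral_mono_set hint2 ?_ (HasSubset.Subset.eventuallyLE hsub)
    exact (ae_restrict_iff' measurableSet_Icc).2 (ae_of_all _ h0)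
  nlinarith

lemma ibp (d : ℕ) {u m φ : (Fin d → ℝ) → ℝ}
    (hu : ContDiff ℝ 2 u) (hm : ContDiff ℝ 1 m) (hφ : ContDiff ℝ 2 φ)
    (hup : ZPer d u) (hmp : ZPer d m) (hφp : ZPer d φ)
    (hfp : ∀ x, divUp d m u x = 0) :
    (∫ x in Icc (0 : Fin d → ℝ) 1, ∑ i, m x * pd d i u x * pd d i φ x) = 0 := by
  have hpdu : ∀ i, ContDiff ℝ 1 (pd d i u) := fun i =>
    contDiff_pd (n := 1) (by exact_mod_cast hu) i
  have hφ1 : ContDiff ℝ 1 φ := hφ.of_le (by norm_num)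
  set F : Fin d → ((Fin d → ℝ) → ℝ) := fun i y => m y * pd d i u y * φ y with hF
  have hC : ∀ i, ContDiff ℝ 1 (F i) := fun i => (hm.mul (hpdu i)).mul hφ1
  have hP : ∀ i, ZPer d (F i) := by
    intro i x k
    show m _ * pd d i u _ * φ _ = _
    rw [hmp x k, hφp x k, pd_per (hu.differentiable (by norm_num)) hup i x k]
  have key := div_int_zero d F hC hP
  have heq : ∀ x, (∑ i, pd d i (F i) x) = ∑ i, m x * pd d i u x * pd d i φ x := by
    intro x
    have hprod : ∀ i, pd d i (F i) x =
        pd d i (fun y => m y * pd d i u y) x * φ x + (m x * pd d i u x) * pd d i φ x := by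
      intro i
      exact pd_mul ((hm.differentiable (by norm_num)).mul ((hpdu i).differentiable (by norm_num)))
        (hφ.differentiable (by norm_num)) i x
    rw [Finset.sum_congr rfl fun i _ => hprod i, Finset.sum_add_distrib, ← Finset.sum_mul]
    have : (∑ i, pd d i (fun y => m y * pd d i u y) x) = divUp d m u x := rfl
    rw [this, hfp x, zero_mul, zero_add]
  rw [← key]
  exact setIntegral_congr_fun measurableSet_Icc fun x _ => (heq x).symm

lemma exists_shift {d : ℕ} (x : Fin d → ℝ) :
    ∃ k : Fin d → ℤ, (x + fun i => (k i : ℝ)) ∈ Icc (0 : Fin d → ℝ) 1 := by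
  refine ⟨fun i => -⌊x i⌋, ?_, ?_⟩ <;> intro i
  · show (0:ℝ) ≤ x i + ((-⌊x i⌋ : ℤ) : ℝ)
    push_cast
    linarith [Int.floor_le (x i)]
  · show x i + ((-⌊x i⌋ : ℤ) : ℝ) ≤ 1
    push_cast
    linarith [Int.lt_floor_add_one (x i)]

theorem stmt9 (d : ℕ) (α : ℝ) (hα0 : 0 < α) (hα1 : α < 1)
    (g : ℝ → ℝ) (V : (Fin d → ℝ) → ℝ) (hg : Ghyp α g) (hV : Vhyp d α V)
    (u₁ m₁ u₂ m₂ : (Fin d → ℝ) → ℝ) (H₁ H₂ : ℝ)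
    (h1 : ErgSol d α g V u₁ m₁ H₁) (h2 : ErgSol d α g V u₂ m₂ H₂) :
    (∫ x in Icc (0 : Fin d → ℝ) 1,
        ((m₁ x - m₂ x) * (g (m₁ x) - g (m₂ x)) +
          (1 / 2) * (m₁ x + m₂ x) * ∑ i, (pd d i u₁ x - pd d i u₂ x) ^ 2)) = 0 ∧
    (∀ x, m₁ x = m₂ x) ∧
    (∀ x, 0 < m₁ x → ∀ i, pd d i u₁ x = pd d i u₂ x) ∧
    H₁ = H₂ := by
  have hu1 : ContDiff ℝ 2 u₁ := h1.reg_u.1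
  have hu2 : ContDiff ℝ 2 u₂ := h2.reg_u.1
  have hm1 : ContDiff ℝ 1 m₁ := h1.reg_m.1
  have hm2 : ContDiff ℝ 1 m₂ := h2.reg_m.1
  have hu1d : Differentiable ℝ u₁ := hu1.differentiable (by norm_num)
  have hu2d : Differentiable ℝ u₂ := hu2.differentiable (by norm_num)
  set φ : (Fin d → ℝ) → ℝ := fun x => u₁ x - u₂ x with hφdef
  have hφ : ContDiff ℝ 2 φ := hu1.sub hu2
  have hφp : ZPer d φ := by
    intro x k
    show u₁ _ - u₂ _ = u₁ x - u₂ x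
    rw [h1.per_u x k, h2.per_u x k]
  have hpdφ : ∀ i x, pd d i φ x = pd d i u₁ x - pd d i u₂ x := fun i x =>
    pd_sub hu1d hu2d i x
  -- the integrand
  set W : (Fin d → ℝ) → ℝ := fun x =>
    (m₁ x - m₂ x) * (g (m₁ x) - g (m₂ x)) +
      (1 / 2) * (m₁ x + m₂ x) * ∑ i, (pd d i u₁ x - pd d i u₂ x) ^ 2 with hWdef
  -- pointwise identity
  have hptw : ∀ x, W x =
      (∑ i, m₁ x * pd d i u₁ x * pd d i φ x) -
        (∑ i, m₂ x * pd d i u₂ x * pd d i φ x) - (H₁ - H₂) * (m₁ x - m₂ x) := by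
    intro x
    have e1 := h1.hj x
    have e2 := h2.hj x
    have hg12 : g (m₁ x) - g (m₂ x)
        = 1/2 * gradSq d u₁ x - 1/2 * gradSq d u₂ x - (H₁ - H₂) := by linarith
    simp only [hWdef, hg12, hpdφ]
    unfold gradSq
    set P := ∑ i, pd d i u₁ x ^ 2 with hP
    set Q := ∑ i, pd d i u₂ x ^ 2 with hQ
    set AB := ∑ i, pd d i u₁ x * pd d i u₂ x with hAB
    have hR : (∑ i, (pd d i u₁ x - pd d i u₂ x) ^ 2) = P - 2*AB + Q := by
      have hc : ∀ i ∈ Finset.univ, (pd d i u₁ x - pd d i u₂ x) ^ 2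
          = (pd d i u₁ x ^ 2 - 2*(pd d i u₁ x * pd d i u₂ x)) + pd d i u₂ x ^ 2 :=
        fun i _ => by ring
      rw [Finset.sum_congr rfl hc, Finset.sum_add_distrib, Finset.sum_sub_distrib,
        ← Finset.mul_sum, hP, hQ, hAB]
    have hS1 : (∑ i, m₁ x * pd d i u₁ x * (pd d i u₁ x - pd d i u₂ x))
        = m₁ x * P - m₁ x * AB := by
      have hc : ∀ i ∈ Finset.univ, m₁ x * pd d i u₁ x * (pd d i u₁ x - pd d i u₂ x)
          = m₁ x * (pd d i u₁ x ^ 2) - m₁ x * (pd d i u₁ x * pd d i u₂ x) :=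
        fun i _ => by ring
      rw [Finset.sum_congr rfl hc, Finset.sum_sub_distrib, ← Finset.mul_sum, ← Finset.mul_sum]
    have hS2 : (∑ i, m₂ x * pd d i u₂ x * (pd d i u₁ x - pd d i u₂ x))
        = m₂ x * AB - m₂ x * Q := by
      have hc : ∀ i ∈ Finset.univ, m₂ x * pd d i u₂ x * (pd d i u₁ x - pd d i u₂ x)
          = m₂ x * (pd d i u₁ x * pd d i u₂ x) - m₂ x * (pd d i u₂ x ^ 2) :=
        fun i _ => by ring
      rw [Finset.sum_congr rfl hc, Finset.sum_sub_distrib, ← Finset.mul_sum, ← Finset.mul_sum]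
    rw [hR, hS1, hS2]
    ring
  -- continuity facts
  have hcontg1 : Continuous (fun x => g (m₁ x)) :=
    hg.2.1.comp_continuous hm1.continuous fun x => h1.m_nonneg x
  have hcontg2 : Continuous (fun x => g (m₂ x)) :=
    hg.2.1.comp_continuous hm2.continuous fun x => h2.m_nonneg x
  have hu1c : ContDiff ℝ 1 u₁ := hu1.of_le (by norm_num)
  have hu2c : ContDiff ℝ 1 u₂ := hu2.of_le (by norm_num)
  have hcontW : Continuous W := by
    refine Continuous.add ?_ ?_
    · exact ((hm1.continuous.sub hm2.continuous).mul (hcontg1.sub hcontg2))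
    · exact (continuous_const.mul (hm1.continuous.add hm2.continuous)).mul
        (continuous_finset_sum _ fun i _ =>
          ((pd_cont hu1c i).sub (pd_cont hu2c i)).pow 2)
  -- the two IBP identities
  have hI1 : (∫ x in Icc (0 : Fin d → ℝ) 1, ∑ i, m₁ x * pd d i u₁ x * pd d i φ x) = 0 :=
    ibp d hu1 hm1 hφ h1.per_u h1.per_m hφp h1.fp
  have hI2 : (∫ x in Icc (0 : Fin d → ℝ) 1, ∑ i, m₂ x * pd d i u₂ x * pd d i φ x) = 0 :=
    ibp d hu2 hm2 hφ h2.per_u h2.per_m hφp h2.fp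
  -- integrability
  have hφc : Continuous φ := hφ.continuous
  have hT1c : Continuous (fun x => ∑ i, m₁ x * pd d i u₁ x * pd d i φ x) :=
    continuous_finset_sum _ fun i _ =>
      (hm1.continuous.mul (pd_cont hu1c i)).mul (pd_cont (hφ.of_le (by norm_num)) i)
  have hT2c : Continuous (fun x => ∑ i, m₂ x * pd d i u₂ x * pd d i φ x) :=
    continuous_finset_sum _ fun i _ =>
      (hm2.continuous.mul (pd_cont hu2c i)).mul (pd_cont (hφ.of_le (by norm_num)) i)
  have hT1int : IntegrableOn (fun x => ∑ i, m₁ x * pd d i u₁ x * pd d i φ x)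
      (Icc (0 : Fin d → ℝ) 1) := hT1c.continuousOn.integrableOn_compact isCompact_Icc
  have hT2int : IntegrableOn (fun x => ∑ i, m₂ x * pd d i u₂ x * pd d i φ x)
      (Icc (0 : Fin d → ℝ) 1) := hT2c.continuousOn.integrableOn_compact isCompact_Icc
  have hmint : IntegrableOn (fun x => (H₁ - H₂) * (m₁ x - m₂ x)) (Icc (0 : Fin d → ℝ) 1) :=
    ((continuous_const.mul (hm1.continuous.sub hm2.continuous))).continuousOn.integrableOn_compact
      isCompact_Icc
  have hm1int : IntegrableOn m₁ (Icc (0 : Fin d → ℝ) 1) :=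
    hm1.continuous.continuousOn.integrableOn_compact isCompact_Icc
  have hm2int : IntegrableOn m₂ (Icc (0 : Fin d → ℝ) 1) :=
    hm2.continuous.continuousOn.integrableOn_compact isCompact_Icc
  have hT12int : IntegrableOn (fun x => (∑ i, m₁ x * pd d i u₁ x * pd d i φ x)
      - ∑ i, m₂ x * pd d i u₂ x * pd d i φ x) (Icc (0 : Fin d → ℝ) 1) := hT1int.sub hT2int
  -- the integral of W vanishes
  have hW0 : (∫ x in Icc (0 : Fin d → ℝ) 1, W x) = 0 := by
    rw [setIntegral_congr_fun measurableSet_Icc (fun x _ => hptw x)]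
    rw [integral_sub hT12int hmint, integral_sub hT1int hT2int, hI1, hI2,
      integral_const_mul, integral_sub hm1int hm2int, h1.m_mass, h2.m_mass]
    ring
  -- nonnegativity
  have hWnn : ∀ x, 0 ≤ W x := by
    intro x
    have hmono := hg.1
    refine add_nonneg ?_ ?_
    · rcases le_total (m₂ x) (m₁ x) with h | h
      · refine mul_nonneg (by linarith) (sub_nonneg.2 ?_)
        exact hmono.monotoneOn (mem_Ici.2 (h2.m_nonneg x)) (mem_Ici.2 (h1.m_nonneg x)) h
      · have hgle : g (m₁ x) ≤ g (m₂ x) :=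
          hmono.monotoneOn (mem_Ici.2 (h1.m_nonneg x)) (mem_Ici.2 (h2.m_nonneg x)) h
        nlinarith
    · refine mul_nonneg (mul_nonneg (by norm_num) ?_) (Finset.sum_nonneg fun i _ => sq_nonneg _)
      linarith [h1.m_nonneg x, h2.m_nonneg x]
  have hWz : ∀ x ∈ Icc (0 : Fin d → ℝ) 1, W x = 0 :=
    cont_nonneg_zero hcontW (fun x _ => hWnn x) hW0
  -- each of the two nonneg parts vanishes on the cube
  have hparts : ∀ x ∈ Icc (0 : Fin d → ℝ) 1,
      (m₁ x - m₂ x) * (g (m₁ x) - g (m₂ x)) = 0 ∧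
      (1 / 2) * (m₁ x + m₂ x) * (∑ i, (pd d i u₁ x - pd d i u₂ x) ^ 2) = 0 := by
    intro x hx
    have h0 := hWz x hx
    have ht1 : 0 ≤ (m₁ x - m₂ x) * (g (m₁ x) - g (m₂ x)) := by
      rcases le_total (m₂ x) (m₁ x) with h | h
      · refine mul_nonneg (by linarith) (sub_nonneg.2 ?_)
        exact hg.1.monotoneOn (mem_Ici.2 (h2.m_nonneg x)) (mem_Ici.2 (h1.m_nonneg x)) h
      · have hgle : g (m₁ x) ≤ g (m₂ x) :=
          hg.1.monotoneOn (mem_Ici.2 (h1.m_nonneg x)) (mem_Ici.2 (h2.m_nonneg x)) h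
        nlinarith
    have ht2 : 0 ≤ (1 / 2) * (m₁ x + m₂ x) * (∑ i, (pd d i u₁ x - pd d i u₂ x) ^ 2) := by
      refine mul_nonneg (mul_nonneg (by norm_num) ?_) (Finset.sum_nonneg fun i _ => sq_nonneg _)
      linarith [h1.m_nonneg x, h2.m_nonneg x]
    simp only [hWdef] at h0
    constructor <;> linarith
  -- m₁ = m₂ on the cube
  have hmIcc : ∀ x ∈ Icc (0 : Fin d → ℝ) 1, m₁ x = m₂ x := by
    intro x hx
    rcases lt_trichotomy (m₁ x) (m₂ x) with h | h | h
    · have hglt : g (m₁ x) < g (m₂ x) :=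
        hg.1 (mem_Ici.2 (h1.m_nonneg x)) (mem_Ici.2 (h2.m_nonneg x)) h
      have := (hparts x hx).1
      nlinarith
    · exact h
    · have hglt : g (m₂ x) < g (m₁ x) :=
        hg.1 (mem_Ici.2 (h2.m_nonneg x)) (mem_Ici.2 (h1.m_nonneg x)) h
      have := (hparts x hx).1
      nlinarith
  -- m₁ = m₂ everywhere
  have hm : ∀ x, m₁ x = m₂ x := by
    intro x
    obtain ⟨k, hk⟩ := exists_shift x
    calc m₁ x = m₁ (x + fun i => (k i : ℝ)) := (h1.per_m x k).symm
      _ = m₂ (x + fun i => (k i : ℝ)) := hmIcc _ hk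
      _ = m₂ x := h2.per_m x k
  -- gradients coincide where m₁ > 0
  have hpd : ∀ x, 0 < m₁ x → ∀ i, pd d i u₁ x = pd d i u₂ x := by
    intro x hx i
    obtain ⟨k, hk⟩ := exists_shift x
    set y := x + fun i => (k i : ℝ) with hy
    have hm1y : m₁ y = m₁ x := h1.per_m x k
    have hm2y : m₂ y = m₁ y := (hm y).symm
    have hsum0 : (∑ i, (pd d i u₁ y - pd d i u₂ y) ^ 2) = 0 := by
      have h2' := (hparts y hk).2
      have hpos : 0 < (1 / 2) * (m₁ y + m₂ y) := by
        rw [hm2y, hm1y]; linarith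
      exact (mul_eq_zero.1 h2').resolve_left (ne_of_gt hpos)
    have hterm : (pd d i u₁ y - pd d i u₂ y) ^ 2 = 0 :=
      (Finset.sum_eq_zero_iff_of_nonneg fun j _ => sq_nonneg _).1 hsum0 i (Finset.mem_univ i)
    have heq : pd d i u₁ y = pd d i u₂ y := by
      have := pow_eq_zero_iff (n := 2) (by norm_num) |>.1 hterm
      linarith [sub_eq_zero.1 this]
    calc pd d i u₁ x = pd d i u₁ y := (pd_per hu1d h1.per_u i x k).symm
      _ = pd d i u₂ y := heq
      _ = pd d i u₂ x := pd_per hu2d h2.per_u i x k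
  -- H₁ = H₂
  have hH : H₁ = H₂ := by
    have hx : ∃ x ∈ Icc (0 : Fin d → ℝ) 1, 0 < m₁ x := by
      by_contra hc
      push_neg at hc
      have hz : ∀ x ∈ Icc (0 : Fin d → ℝ) 1, m₁ x = (0 : ℝ) :=
        fun x hx => le_antisymm (hc x hx) (h1.m_nonneg x)
      have : (∫ x in Icc (0 : Fin d → ℝ) 1, m₁ x) = 0 := by
        rw [setIntegral_congr_fun measurableSet_Icc hz]
        simp
      rw [h1.m_mass] at this
      norm_num at this
    obtain ⟨x₀, hx₀, hpos⟩ := hx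
    have e1 := h1.hj x₀
    have e2 := h2.hj x₀
    have hgrad : gradSq d u₁ x₀ = gradSq d u₂ x₀ :=
      Finset.sum_congr rfl fun i _ => by rw [hpd x₀ hpos i]
    have hgm : g (m₁ x₀) = g (m₂ x₀) := by rw [hm x₀]
    linarith
  exact ⟨hW0, hm, hpd, hH⟩
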